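/- For Z a binomial random variable with parameters n and q, if the mean nq is at most k-1 (with k a positive integer), then P(Z ≤ k-1) ≥ 1/2. -/

import Mathlib

open Finset


private lemma keyA_core (j a b : ℕ) (ha : 1 ≤ a) (hab : a ≤ b) :
    a*(a+2*j+2)*((b+j)*(b+j)) ≤ b*(b+2*j+2)*((a+j+1)*(a+j+1)) := by
  obtain ⟨e, rfl⟩ : ∃ e, a = e + 1 := ⟨a-1, by omega⟩
  obtain ⟨d, rfl⟩ : ∃ d, b = e + 1 + d := ⟨b-(e+1), by omega⟩
  have h : (e+1+d)*((e+1+d)+2*j+2)*(((e+1)+j+1)*((e+1)+j+1))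
      = (e+1)*((e+1)+2*j+2)*(((e+1+d)+j)*((e+1+d)+j))
      + (9 + 12*j + 4*j^2 + 10*d + 14*d*j + 8*d*j^2 + 2*d*j^3 + d^2 + 2*d^2*j + d^2*j^2
        + 18*e + 18*e*j + 4*e*j^2 + 10*d*e + 8*d*e*j + 2*d*e*j^2 + 11*e^2 + 6*e^2*j
        + 2*d*e^2 + 2*e^3) := by ring
  omega

private lemma keyA (n m : ℕ) (hn : n ≤ 2*m+1) :
    ∀ j, j ≤ m → m+1+j ≤ n →
      n.choose (m+1+j) * m^(2*j+1) ≤ n.choose (m-j) * (n-m)^(2*j+1) := by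
  intro j
  induction j with
  | zero =>
    intro _ hj
    have h1 := Nat.choose_succ_right_eq n m
    have h2 : n.choose (m+1) * m ≤ n.choose (m+1) * (m+1) :=
      Nat.mul_le_mul_left _ (by omega)
    simpa using h2.trans (le_of_eq h1)
  | succ j ih =>
    intro hj1 hn2
    obtain ⟨B, hB⟩ : ∃ B, m = B + 1 + j := ⟨m-1-j, by omega⟩
    obtain ⟨A, hA⟩ : ∃ A, n = A + 1 + (m+1+j) := ⟨n-m-j-2, by omega⟩
    have hAB : A ≤ B := by omega
    have ihj : n.choose (m+1+j) * m^(2*j+1) ≤ n.choose (m-j) * (n-m)^(2*j+1) :=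
      ih (by omega) (by omega)
    set c1 := n.choose (m+1+j) with hc1
    set c2 := n.choose (m+1+(j+1)) with hc2
    set v1 := n.choose (m-j) with hv1
    set v2 := n.choose (m-(j+1)) with hv2
    have e1 : c2 * (B+2*j+3) = c1 * (A+1) := by
      rw [hc2, hc1, show m+1+(j+1) = (m+1+j)+1 by omega,
        show B+2*j+3 = (m+1+j)+1 by omega, Nat.choose_succ_right_eq n (m+1+j),
        show n - (m+1+j) = A+1 by omega]
    have e2 : v1 * (B+1) = v2 * (A+2*j+3) := by
      rw [hv1, hv2, show m-j = B+1 by omega, show m-(j+1) = B by omega,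
        Nat.choose_succ_right_eq n B, show n - B = A+2*j+3 by omega]
    have core := keyA_core j (A+1) (B+1) (by omega) (by omega)
    have H := Nat.mul_le_mul ihj core
    have Hl : c1 * m^(2*j+1) * ((A+1)*((A+1)+2*j+2)*(((B+1)+j)*((B+1)+j)))
        = (c2 * m^(2*(j+1)+1)) * ((A+2*j+3)*(B+2*j+3)) := by
      rw [show (B+1)+j = m by omega]
      calc c1 * m^(2*j+1) * ((A+1)*((A+1)+2*j+2)*(m*m))
          = (c1*(A+1)) * ((A+2*j+3) * m^(2*j+1)*m*m) := by ring
        _ = (c2 * (B+2*j+3)) * ((A+2*j+3) * m^(2*j+1)*m*m) := by rw [← e1]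
        _ = (c2 * m^(2*(j+1)+1)) * ((A+2*j+3)*(B+2*j+3)) := by ring
    have Hr : v1 * (n-m)^(2*j+1) * ((B+1)*((B+1)+2*j+2)*(((A+1)+j+1)*((A+1)+j+1)))
        = (v2 * (n-m)^(2*(j+1)+1)) * ((A+2*j+3)*(B+2*j+3)) := by
      rw [show (A+1)+j+1 = n-m by omega]
      calc v1 * (n-m)^(2*j+1) * ((B+1)*((B+1)+2*j+2)*((n-m)*(n-m)))
          = (v1*(B+1)) * ((B+2*j+3) * (n-m)^(2*j+1)*(n-m)*(n-m)) := by ring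
        _ = (v2 * (A+2*j+3)) * ((B+2*j+3) * (n-m)^(2*j+1)*(n-m)*(n-m)) := by rw [← e2]
        _ = (v2 * (n-m)^(2*(j+1)+1)) * ((A+2*j+3)*(B+2*j+3)) := by ring
    rw [Hl, Hr] at H
    exact Nat.le_of_mul_le_mul_right H (by positivity)

private lemma sum_binom_eq_one (n : ℕ) (q : ℝ) :
    ∑ i ∈ range (n+1), (n.choose i : ℝ) * q^i * (1-q)^(n-i) = 1 := by
  have h := add_pow q (1-q) n
  simp only [add_sub_cancel, one_pow] at h
  rw [show ∑ i ∈ range (n+1), (n.choose i : ℝ) * q^i * (1-q)^(n-i)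
      = ∑ i ∈ range (n+1), q^i * (1-q)^(n-i) * (n.choose i : ℝ) from
    Finset.sum_congr rfl (fun i _ => by ring), ← h]

private lemma termwiseA (n m j : ℕ) (q : ℝ) (hq0 : 0 ≤ q) (hq1 : q ≤ 1)
    (hmn : m+1 ≤ n) (hn : n ≤ 2*m+1) (hmean : (n:ℝ)*q ≤ m) (hj : j ≤ m) :
    (n.choose (m+1+j) : ℝ) * q^(m+1+j) * (1-q)^(n-(m+1+j))
      ≤ (n.choose (m-j) : ℝ) * q^(m-j) * (1-q)^(n-(m-j)) := by
  have h1q : (0:ℝ) ≤ 1 - q := by linarith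
  by_cases hbig : n < m+1+j
  · rw [Nat.choose_eq_zero_of_lt hbig]
    simp only [Nat.cast_zero, zero_mul]
    positivity
  push_neg at hbig
  have hN : (0:ℝ) < n := by exact_mod_cast (show 0 < n by omega)
  -- key: C1 * q^(2j+1) ≤ C2 * (1-q)^(2j+1)
  have key : (n.choose (m+1+j) : ℝ) * q^(2*j+1) ≤ (n.choose (m-j) : ℝ) * (1-q)^(2*j+1) := by
    have hk := keyA n m hn j hj hbig
    have hkR : (n.choose (m+1+j) : ℝ) * (m:ℝ)^(2*j+1)
        ≤ (n.choose (m-j) : ℝ) * ((n:ℝ)-(m:ℝ))^(2*j+1) := by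
      have := Nat.cast_le (α := ℝ) |>.2 hk
      push_cast [Nat.cast_sub (show m ≤ n by omega)] at this
      exact this
    have c1 : (n.choose (m+1+j) : ℝ) * ((n:ℝ)*q)^(2*j+1)
        ≤ (n.choose (m+1+j) : ℝ) * (m:ℝ)^(2*j+1) :=
      mul_le_mul_of_nonneg_left (pow_le_pow_left₀ (by positivity) hmean _) (by positivity)
    have c2 : (n.choose (m-j) : ℝ) * ((n:ℝ)-(m:ℝ))^(2*j+1)
        ≤ (n.choose (m-j) : ℝ) * ((n:ℝ)*(1-q))^(2*j+1) := by
      refine mul_le_mul_of_nonneg_left (pow_le_pow_left₀ ?_ (by nlinarith) _) (by positivity)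
      have : (m:ℝ) ≤ n := by exact_mod_cast (show m ≤ n by omega)
      linarith
    have hchain := (c1.trans hkR).trans c2
    rw [mul_pow, mul_pow] at hchain
    have hnp : (0:ℝ) < (n:ℝ)^(2*j+1) := by positivity
    have e1 : (n.choose (m+1+j):ℝ) * ((n:ℝ)^(2*j+1) * q^(2*j+1))
        = (n:ℝ)^(2*j+1) * ((n.choose (m+1+j):ℝ) * q^(2*j+1)) := by ring
    have e2 : (n.choose (m-j):ℝ) * ((n:ℝ)^(2*j+1) * (1-q)^(2*j+1))
        = (n:ℝ)^(2*j+1) * ((n.choose (m-j):ℝ) * (1-q)^(2*j+1)) := by ring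
    rw [e1, e2] at hchain
    exact (mul_le_mul_iff_right₀ hnp).1 hchain
  have epow1 : q^(m+1+j) = q^(m-j) * q^(2*j+1) := by rw [← pow_add]; congr 1; omega
  have epow2 : (1-q)^(n-(m-j)) = (1-q)^(n-(m+1+j)) * (1-q)^(2*j+1) := by
    rw [← pow_add]; congr 1; omega
  calc (n.choose (m+1+j) : ℝ) * q^(m+1+j) * (1-q)^(n-(m+1+j))
      = ((n.choose (m+1+j) : ℝ) * q^(2*j+1)) * (q^(m-j) * (1-q)^(n-(m+1+j))) := by
        rw [epow1]; ring
    _ ≤ ((n.choose (m-j) : ℝ) * (1-q)^(2*j+1)) * (q^(m-j) * (1-q)^(n-(m+1+j))) := by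
        apply mul_le_mul_of_nonneg_right key (by positivity)
    _ = (n.choose (m-j) : ℝ) * q^(m-j) * (1-q)^(n-(m-j)) := by rw [epow2]; ring

private lemma caseA (n m : ℕ) (q : ℝ) (hq0 : 0 ≤ q) (hq1 : q ≤ 1)
    (hmn : m+1 ≤ n) (hn : n ≤ 2*m+1) (hmean : (n:ℝ)*q ≤ m) :
    1/2 ≤ ∑ i ∈ range (m+1), (n.choose i : ℝ) * q^i * (1-q)^(n-i) := by
  have h1q : (0:ℝ) ≤ 1 - q := by linarith
  set p : ℕ → ℝ := fun i => (n.choose i : ℝ) * q^i * (1-q)^(n-i) with hp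
  have hp0 : ∀ i, 0 ≤ p i := fun i => by rw [hp]; positivity
  have htot : ∑ i ∈ range (m+1), p i + ∑ i ∈ Ico (m+1) (n+1), p i = 1 := by
    rw [Finset.sum_range_add_sum_Ico _ (by omega)]; exact sum_binom_eq_one n q
  have hS : ∑ i ∈ Ico (m+1) (n+1), p i ≤ ∑ i ∈ range (m+1), p i := by
    rw [Finset.sum_Ico_eq_sum_range]
    have h1 : ∑ j ∈ range (n+1-(m+1)), p (m+1+j) ≤ ∑ j ∈ range (m+1), p (m+1+j) :=
      Finset.sum_le_sum_of_subset_of_nonneg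
        (Finset.range_subset_range.2 (by omega)) (fun i _ _ => hp0 _)
    refine h1.trans ?_
    have h2 : ∀ j ∈ range (m+1), p (m+1+j) ≤ p (m-j) := fun j hj =>
      termwiseA n m j q hq0 hq1 hmn hn hmean (by simpa [Nat.lt_succ_iff] using hj)
    refine (Finset.sum_le_sum h2).trans (le_of_eq ?_)
    have := Finset.sum_range_reflect p (m+1)
    simpa using this
  linarith

private lemma hasDerivAt_F (n m : ℕ) (hmn : m+1 ≤ n) (q : ℝ) :
    HasDerivAt (fun x : ℝ => ∑ i ∈ range (m+1), (n.choose i : ℝ) * x^i * (1-x)^(n-i))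
      (-((((m+1) * n.choose (m+1) : ℕ)):ℝ) * (q^m * (1-q)^(n-(m+1)))) q := by
  set T : ℕ → ℝ := fun i => ((i * n.choose i : ℕ):ℝ) * (q^(i-1) * (1-q)^(n-i)) with hT
  have hterm : ∀ i ∈ range (m+1),
      HasDerivAt (fun x : ℝ => (n.choose i:ℝ) * x^i * (1-x)^(n-i)) (T i - T (i+1)) q := by
    intro i hi
    have hi' : i ≤ m := Nat.lt_succ_iff.1 (mem_range.1 hi)
    have h1 : HasDerivAt (fun x : ℝ => x^i) ((i:ℝ)*q^(i-1)) q := hasDerivAt_pow i q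
    have h2 : HasDerivAt (fun x : ℝ => (1-x)^(n-i))
        (((n-i:ℕ):ℝ) * (1-q)^(n-i-1) * (-1)) q :=
      ((hasDerivAt_id q).const_sub 1).pow (n-i)
    have h3 := (h1.mul h2).const_mul ((n.choose i : ℝ))
    simp only [← mul_assoc, Pi.mul_apply] at h3
    refine h3.congr_deriv ?_
    have hch : ((i+1) * n.choose (i+1) : ℕ) = (n.choose i) * (n-i) := by
      rw [mul_comm]; exact Nat.choose_succ_right_eq n i
    have hni : ((n-i:ℕ):ℝ) = (n:ℝ) - i := Nat.cast_sub (by omega)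
    have hT1 : T (i+1) = (n.choose i : ℝ) * ((n:ℝ)-(i:ℝ)) * (q^i * (1-q)^(n-i-1)) := by
      rw [hT]
      simp only [hch]
      rw [show (i+1)-1 = i from by omega, show n - (i+1) = n - i - 1 from by omega]
      push_cast [Nat.cast_sub (show i ≤ n by omega)]
      ring
    have hT0 : T i = (i:ℝ) * (n.choose i:ℝ) * (q^(i-1) * (1-q)^(n-i)) := by
      rw [hT]; push_cast; ring
    rw [hT0, hT1, hni]
    ring
  have hsum := HasDerivAt.sum hterm
  rw [Finset.sum_range_sub' T (m+1)] at hsum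
  have hT0 : T 0 = 0 := by rw [hT]; simp
  have hTm : T (m+1) = ((((m+1) * n.choose (m+1) : ℕ)):ℝ) * (q^m * (1-q)^(n-(m+1))) := by
    show ((((m+1) * n.choose (m+1) : ℕ)):ℝ) * (q^((m+1)-1) * (1-q)^(n-(m+1)))
      = _
    rw [show (m+1)-1 = m from by omega]
  rw [hT0, hTm] at hsum
  simpa [Finset.sum_fn] using hsum

private lemma le_of_deriv_nonneg_Icc {f f' : ℝ → ℝ} {a b : ℝ} (hab : a ≤ b)
    (hc : ContinuousOn f (Set.Icc a b))
    (hd : ∀ y ∈ Set.Ioo a b, HasDerivAt f (f' y) y)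
    (h0 : ∀ y ∈ Set.Ioo a b, 0 ≤ f' y) : f a ≤ f b := by
  have h := monotoneOn_of_hasDerivWithinAt_nonneg (f' := f') (convex_Icc a b) hc
    (fun y hy => (hd y (by rwa [interior_Icc] at hy)).hasDerivWithinAt)
    (fun y hy => h0 y (by rwa [interior_Icc] at hy))
  exact h (Set.mem_Icc.2 ⟨le_refl a, hab⟩) (Set.mem_Icc.2 ⟨hab, le_refl b⟩) hab

set_option maxHeartbeats 1000000 in
private lemma pointwiseB (n m : ℕ) (x : ℝ) (hm : 1 ≤ m) (hn : 2*m+2 ≤ n)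
    (hx0 : 0 < x) (hxc : x < (m:ℝ)/n) :
    ((m:ℝ)/n - x)^m * (1-(m:ℝ)/n+x)^(n-(m+1)) ≤ ((m:ℝ)/n + x)^m * (1-(m:ℝ)/n-x)^(n-(m+1)) := by
  have hM1 : (1:ℝ) ≤ (m:ℝ) := by exact_mod_cast hm
  have hNM : 2*(m:ℝ)+2 ≤ (n:ℝ) := by exact_mod_cast hn
  have hN0 : (0:ℝ) < n := by linarith
  have hb : ((n - (m+1) : ℕ) : ℝ) = (n:ℝ) - (m:ℝ) - 1 := by
    push_cast [Nat.cast_sub (show m+1 ≤ n by omega)]; ring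
  set M := (m:ℝ) with hM
  set N := (n:ℝ) with hN
  set c : ℝ := M/N with hc
  have hc0 : 0 < c := hc ▸ div_pos (lt_of_lt_of_le one_pos hM1) hN0
  have hcN : c*N = M := by rw [hc]; field_simp
  clear_value M N
  clear_value c
  have h2c : 2*c < 1 := by nlinarith
  have hcx : x < c := hxc
  set B : ℝ := N - M - 1 with hBdef
  clear_value B
  have hB0 : 0 ≤ B := by rw [hBdef]; linarith
  have hc1 : c < 1 := by linarith
  have hid : M*(1-c) = B*c + c := by rw [hBdef]; linear_combination (-1 : ℝ) * hcN
  set φ : ℝ → ℝ := fun y =>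
    M*Real.log (c+y) + B*Real.log (1-c-y) - M*Real.log (c-y) - B*Real.log (1-c+y) with hφ
  clear_value φ
  set φ' : ℝ → ℝ := fun y =>
    M*(c+y)⁻¹ + B*(-(1-c-y)⁻¹) - M*(-(c-y)⁻¹) - B*((1-c+y)⁻¹) with hφ'
  clear_value φ'
  have hφ'y : ∀ y : ℝ, φ' y = M*(c+y)⁻¹ + B*(-(1-c-y)⁻¹) - M*(-(c-y)⁻¹) - B*((1-c+y)⁻¹) := by
    intro y; rw [hφ']
  have hd : ∀ y ∈ Set.Ioo (0:ℝ) x, HasDerivAt φ (φ' y) y := by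
    intro y hy
    obtain ⟨hy0, hyx⟩ := hy
    have p1 : (0:ℝ) < c + y := by linarith
    have p2 : (0:ℝ) < 1 - c - y := by linarith
    have p3 : (0:ℝ) < c - y := by linarith
    have p4 : (0:ℝ) < 1 - c + y := by linarith
    have d1 : HasDerivAt (fun y : ℝ => Real.log (c+y)) ((c+y)⁻¹) y := by
      have h := (((hasDerivAt_id y).const_add c).log p1.ne')
      simpa [one_div] using h
    have d2 : HasDerivAt (fun y : ℝ => Real.log (1-c-y)) (-(1-c-y)⁻¹) y := by
      have h := (((hasDerivAt_id y).const_sub (1-c)).log p2.ne')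
      simpa [neg_div, one_div] using h
    have d3 : HasDerivAt (fun y : ℝ => Real.log (c-y)) (-(c-y)⁻¹) y := by
      have h := (((hasDerivAt_id y).const_sub c).log p3.ne')
      simpa [neg_div, one_div] using h
    have d4 : HasDerivAt (fun y : ℝ => Real.log (1-c+y)) ((1-c+y)⁻¹) y := by
      have h := (((hasDerivAt_id y).const_add (1-c)).log p4.ne')
      simpa [one_div, add_comm, sub_add_eq_add_sub] using h
    rw [hφ, hφ'y]
    exact (((d1.const_mul M).add (d2.const_mul B)).sub (d3.const_mul M)).sub (d4.const_mul B)
  have hd_nonneg : ∀ y ∈ Set.Ioo (0:ℝ) x, 0 ≤ φ' y := by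
    intro y hy
    obtain ⟨hy0, hyx⟩ := hy
    have p1 : (0:ℝ) < c + y := by linarith
    have p2 : (0:ℝ) < 1 - c - y := by linarith
    have p3 : (0:ℝ) < c - y := by linarith
    have p4 : (0:ℝ) < 1 - c + y := by linarith
    have hyc : y < c := by linarith
    have hy2c : y^2 ≤ c^2 := by nlinarith
    have hkey2 : B*(1-c)*(c^2-y^2) ≤ M*c*((1-c)^2-y^2) := by
      have cert : c^2*(M*c*((1-c)^2-y^2) - B*(1-c)*(c^2-y^2))
          = (c^2-y^2)*(c^2*(1-c)) + y^2*(M*c*(1-2*c)) := by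
        linear_combination (c*(1-c)*(c^2-y^2)) * hid
      nlinarith [mul_nonneg (sub_nonneg.2 hy2c)
          (mul_nonneg (mul_nonneg hc0.le hc0.le) (by linarith : (0:ℝ) ≤ 1-c)),
        mul_nonneg (sq_nonneg y)
          (mul_nonneg (mul_nonneg (by linarith : (0:ℝ) ≤ M) hc0.le)
            (by linarith : (0:ℝ) ≤ 1-2*c)),
        cert, sq_nonneg c, hc0]
    have hq1 : (0:ℝ) < (c+y)*(c-y) := mul_pos p1 p3
    have hq2 : (0:ℝ) < (1-c-y)*(1-c+y) := mul_pos p2 p4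
    have e4 : M*(c+y)⁻¹ + M*(c-y)⁻¹ = 2*c*M/((c+y)*(c-y)) := by
      field_simp; ring
    have e5 : B*(1-c-y)⁻¹ + B*(1-c+y)⁻¹ = 2*(1-c)*B/((1-c-y)*(1-c+y)) := by
      field_simp; ring
    have hfin : 2*(1-c)*B/((1-c-y)*(1-c+y)) ≤ 2*c*M/((c+y)*(c-y)) := by
      rw [div_le_div_iff₀ hq2 hq1,
        show 2*(1-c)*B*((c+y)*(c-y)) = 2*(B*(1-c)*(c^2-y^2)) from by ring,
        show 2*c*M*((1-c-y)*(1-c+y)) = 2*(M*c*((1-c)^2-y^2)) from by ring]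
      linarith [hkey2]
    rw [hφ'y]
    linarith [e4, e5, hfin]
  have hcont : ContinuousOn φ (Set.Icc 0 x) := by
    have c1 : ∀ y ∈ Set.Icc (0:ℝ) x, c + y ≠ 0 := fun y hy => by
      have h1 := hy.1
      have h2 : (0:ℝ) < c + y := by linarith
      exact h2.ne'
    have c2 : ∀ y ∈ Set.Icc (0:ℝ) x, 1 - c - y ≠ 0 := fun y hy => by
      have h1 := hy.2
      have h2 : (0:ℝ) < 1 - c - y := by linarith
      exact h2.ne'
    have c3 : ∀ y ∈ Set.Icc (0:ℝ) x, c - y ≠ 0 := fun y hy => by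
      have h1 := hy.2
      have h2 : (0:ℝ) < c - y := by linarith
      exact h2.ne'
    have c4 : ∀ y ∈ Set.Icc (0:ℝ) x, 1 - c + y ≠ 0 := fun y hy => by
      have h1 := hy.1
      have h2 : (0:ℝ) < 1 - c + y := by linarith
      exact h2.ne'
    rw [hφ]
    refine (((((continuous_const.add continuous_id).continuousOn.log c1).const_smul M).add
      ((((continuous_const.sub continuous_id)).continuousOn.log c2).const_smul B)).sub
      ((((continuous_const.sub continuous_id)).continuousOn.log c3).const_smul M)).sub
      ((((continuous_const.add continuous_id).continuousOn.log c4).const_smul B)) |>.congr ?_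
    intro y hy; simp [smul_eq_mul]
  have hφ0 : φ 0 = 0 := by rw [hφ]; simp
  have hφx : 0 ≤ φ x := by
    rw [← hφ0]
    exact le_of_deriv_nonneg_Icc hx0.le hcont hd hd_nonneg
  have pcx : (0:ℝ) < c - x := by linarith
  have pcx2 : (0:ℝ) < 1 - c + x := by linarith
  have pp1 : (0:ℝ) < c + x := by linarith
  have pp2 : (0:ℝ) < 1 - c - x := by linarith
  have hlog : Real.log ((c-x)^m * (1-c+x)^(n-(m+1)))
      ≤ Real.log ((c+x)^m * (1-c-x)^(n-(m+1))) := by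
    rw [Real.log_mul (pow_ne_zero _ pcx.ne') (pow_ne_zero _ pcx2.ne'),
      Real.log_mul (pow_ne_zero _ pp1.ne') (pow_ne_zero _ pp2.ne'),
      Real.log_pow, Real.log_pow, Real.log_pow, Real.log_pow, hb, ← hM]
    have h9 := hφx
    rw [hφ] at h9
    dsimp only at h9
    linarith
  exact (Real.log_le_log_iff (by positivity) (by positivity)).1 hlog

private lemma ge_of_deriv_nonpos_Icc {f f' : ℝ → ℝ} {a b : ℝ} (hab : a ≤ b)
    (hc : ContinuousOn f (Set.Icc a b))
    (hd : ∀ y ∈ Set.Ioo a b, HasDerivAt f (f' y) y)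
    (h0 : ∀ y ∈ Set.Ioo a b, f' y ≤ 0) : f b ≤ f a := by
  have h := antitoneOn_of_hasDerivWithinAt_nonpos (f' := f') (convex_Icc a b) hc
    (fun y hy => (hd y (by rwa [interior_Icc] at hy)).hasDerivWithinAt)
    (fun y hy => h0 y (by rwa [interior_Icc] at hy))
  exact h (Set.mem_Icc.2 ⟨le_refl a, hab⟩) (Set.mem_Icc.2 ⟨hab, le_refl b⟩) hab

private lemma F_zero (n m : ℕ) :
    ∑ i ∈ range (m+1), (n.choose i : ℝ) * (0:ℝ)^i * (1-(0:ℝ))^(n-i) = 1 := by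
  rw [Finset.sum_eq_single 0]
  · simp
  · intro i _ hi
    simp [zero_pow hi]
  · intro h
    exact absurd (mem_range.2 (by omega)) h

private lemma caseB (n m : ℕ) (q : ℝ) (hq0 : 0 ≤ q) (hm : 1 ≤ m) (hn : 2*m+2 ≤ n)
    (hmean : (n:ℝ)*q ≤ m) :
    1/2 ≤ ∑ i ∈ range (m+1), (n.choose i : ℝ) * q^i * (1-q)^(n-i) := by
  have hmn : m+1 ≤ n := by omega
  have hM1 : (1:ℝ) ≤ (m:ℝ) := by exact_mod_cast hm
  have hNM : 2*(m:ℝ)+2 ≤ (n:ℝ) := by exact_mod_cast hn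
  have hN0 : (0:ℝ) < n := by linarith
  set A : ℝ := (((m+1) * n.choose (m+1) : ℕ):ℝ) with hA
  have hA0 : (0:ℝ) ≤ A := by rw [hA]; positivity
  set F : ℝ → ℝ := fun x => ∑ i ∈ range (m+1), (n.choose i : ℝ) * x^i * (1-x)^(n-i) with hF
  have hgoal : (∑ i ∈ range (m+1), (n.choose i : ℝ) * q^i * (1-q)^(n-i)) = F q := by rw [hF]
  rw [hgoal]
  have hdF : ∀ x : ℝ, HasDerivAt F (-A * (x^m * (1-x)^(n-(m+1)))) x := by
    intro x
    rw [hF, hA]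
    exact hasDerivAt_F n m hmn x
  have hcontF : Continuous F := by
    have hdiff : Differentiable ℝ F := fun x => (hdF x).differentiableAt
    exact hdiff.continuous
  set c : ℝ := (m:ℝ)/(n:ℝ) with hc
  have hc0 : (0:ℝ) < c := by rw [hc]; positivity
  have h2c : 2*c < 1 := by
    have h : (m:ℝ)/n < 1/2 := (div_lt_iff₀ hN0).2 (by linarith)
    rw [hc]; linarith
  have hc1 : c < 1 := by linarith
  have hqc : q ≤ c := by
    rw [hc, le_div_iff₀ hN0]
    linarith [mul_comm q (n:ℝ)]
  -- Step 1 : F c ≤ F q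
  have step1 : F c ≤ F q := by
    apply ge_of_deriv_nonpos_Icc (f' := fun y => -A * (y^m * (1-y)^(n-(m+1)))) hqc
      hcontF.continuousOn (fun y _ => hdF y)
    intro y hy
    have hy0 : 0 < y := lt_of_le_of_lt hq0 hy.1
    have hy1 : y < 1 := by have := hy.2; linarith
    have : 0 ≤ A * (y^m * (1-y)^(n-(m+1))) := by
      apply mul_nonneg hA0 (mul_nonneg (pow_nonneg hy0.le _) (pow_nonneg (by linarith) _))
    linarith
  -- Step 2 : reflection
  set ψ : ℝ → ℝ := fun y => F (c-y) + F (c+y) with hψ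
  have hψval : ∀ y, ψ y = F (c-y) + F (c+y) := fun y => by rw [hψ]
  have hdψ : ∀ y : ℝ, HasDerivAt ψ
      (A * ((c-y)^m * (1-(c-y))^(n-(m+1))) + -A * ((c+y)^m * (1-(c+y))^(n-(m+1)))) y := by
    intro y
    have h1 : HasDerivAt (fun y : ℝ => F (c-y)) (A * ((c-y)^m * (1-(c-y))^(n-(m+1)))) y := by
      have h := (hdF (c-y)).comp y ((hasDerivAt_id y).const_sub c)
      exact h.congr_deriv (by ring)
    have h2 : HasDerivAt (fun y : ℝ => F (c+y)) (-A * ((c+y)^m * (1-(c+y))^(n-(m+1)))) y := by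
      have h := (hdF (c+y)).comp y ((hasDerivAt_id y).const_add c)
      exact h.congr_deriv (by ring)
    rw [hψ]
    exact h1.add h2
  have hψsign : ∀ y ∈ Set.Ioo (0:ℝ) c,
      A * ((c-y)^m * (1-(c-y))^(n-(m+1))) + -A * ((c+y)^m * (1-(c+y))^(n-(m+1))) ≤ 0 := by
    intro y hy
    have pw := pointwiseB n m y hm hn hy.1 (by rw [← hc]; exact hy.2)
    rw [← hc] at pw
    have h1 : A * ((c-y)^m * (1-c+y)^(n-(m+1))) ≤ A * ((c+y)^m * (1-c-y)^(n-(m+1))) :=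
      mul_le_mul_of_nonneg_left pw hA0
    have e1 : (1:ℝ)-(c-y) = 1-c+y := by ring
    have e2 : (1:ℝ)-(c+y) = 1-c-y := by ring
    rw [e1, e2]
    linarith
  have hψc : ψ c ≤ ψ 0 := by
    apply ge_of_deriv_nonpos_Icc (f' := fun y =>
        A * ((c-y)^m * (1-(c-y))^(n-(m+1))) + -A * ((c+y)^m * (1-(c+y))^(n-(m+1)))) hc0.le
      ?_ (fun y _ => hdψ y) hψsign
    exact ((hcontF.comp (continuous_const.sub continuous_id)).add
      (hcontF.comp (continuous_const.add continuous_id))).continuousOn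
  have hψ0 : ψ 0 = 2 * F c := by rw [hψval]; simp; ring
  have hψcc : ψ c = F 0 + F (c+c) := by rw [hψval, sub_self]
  have hF0 : F 0 = 1 := by rw [hF]; exact F_zero n m
  have hFcc : 0 ≤ F (c+c) := by
    rw [hF]
    apply Finset.sum_nonneg
    intro i _
    have h1 : (0:ℝ) ≤ c+c := by linarith
    have h2 : (0:ℝ) ≤ 1-(c+c) := by linarith
    positivity
  -- combine
  have : 1 ≤ 2 * F c := by
    rw [← hψ0]
    calc (1:ℝ) ≤ F 0 + F (c+c) := by linarith
      _ = ψ c := hψcc.symm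
      _ ≤ ψ 0 := hψc
  linarith


/-- For `Z ~ Bin(n, q)`, if the mean `n*q` is at most `k-1` (with `k ≥ 1`),
then `P(Z ≤ k-1) ≥ 1/2`.  Here `P(Z ≤ k-1) = ∑_{i=0}^{k-1} C(n,i) q^i (1-q)^{n-i}`. -/
theorem binomial_cdf_at_mean_ge_half (n k : ℕ) (q : ℝ)
    (hk : 1 ≤ k) (hq0 : 0 ≤ q) (hq1 : q ≤ 1)
    (hmean : (n : ℝ) * q ≤ (k : ℝ) - 1) :
    (1 : ℝ) / 2 ≤ ∑ i ∈ Finset.range k, (n.choose i : ℝ) * q ^ i * (1 - q) ^ (n - i) := by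
  obtain ⟨m, rfl⟩ : ∃ m, k = m + 1 := ⟨k - 1, by omega⟩
  have hmean' : (n:ℝ) * q ≤ (m:ℝ) := by push_cast at hmean; linarith
  by_cases hkn : n < m + 1
  · have hsub : range (n+1) ⊆ range (m+1) := Finset.range_subset_range.2 (by omega)
    have heq : ∑ i ∈ range (n+1), (n.choose i : ℝ) * q ^ i * (1 - q) ^ (n - i)
        = ∑ i ∈ range (m+1), (n.choose i : ℝ) * q ^ i * (1 - q) ^ (n - i) := by
      apply Finset.sum_subset hsub
      intro i _ hi
      have hni : n < i := by
        rcases Finset.mem_range.1 (by assumption : i ∈ range (m+1)) with _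
        by_contra hcon
        exact hi (Finset.mem_range.2 (by omega))
      rw [Nat.choose_eq_zero_of_lt hni]
      simp
    rw [← heq, sum_binom_eq_one]
    linarith
  · push_neg at hkn
    by_cases hA : n ≤ 2*m+1
    · exact caseA n m q hq0 hq1 hkn hA hmean'
    · push_neg at hA
      by_cases hm0 : m = 0
      · subst hm0
        have hn2 : (2:ℝ) ≤ (n:ℝ) := by exact_mod_cast (show 2 ≤ n by omega)
        have hq : q = 0 := by
          simp only [Nat.cast_zero] at hmean'
          nlinarith
        subst hq
        rw [F_zero n 0]
        linarith
      · exact caseB n m q hq0 (by omega) (by omega) hmean'
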